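/- arXiv:0910.0793 — 2 statements merged into one kernel-verified Lean document; each statement's English description precedes it below -/
import Mathlib

section
/- Let σ ⊂ ℝ^n be a reflexive Gorenstein cone of index r with respect to the lattice ℤ^n, with distinguished lattice points n_σ (in the dual lattice) and m_{σ∨} (in ℤ^n), and let σ_{(r)} = {x ∈ σ : ⟨x, n_σ⟩ = r} and σ∨_{(1)} = {y ∈ σ∨ : ⟨m_{σ∨}, y⟩ = 1}. Regard P := σ_{(r)} − m_{σ∨} as a reflexive polytope in the hyperplane n_σ^⊥ with lattice ℤ^n ∩ n_σ^⊥, whose dual lattice is ℤ^n/ℤ·n_σ, and let π : ℝ^n → ℝ^n/ℝ·n_σ be the quotient map. Then the dual reflexive polytope P* = {ȳ ∈ ℝ^n/ℝ·n_σ : ⟨x, ȳ⟩ ≥ −1 for all x ∈ P} equals π(σ∨_{(1)}). -/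
open scoped Pointwise
open Set

noncomputable section

/-- The standard pairing on `ℝ^n`. -/
def pairing {n : ℕ} (x y : Fin n → ℝ) : ℝ := ∑ i, x i * y i

/-- A point of `ℝ^n` lying in the lattice `ℤ^n`. -/
def IsLatticePt {n : ℕ} (x : Fin n → ℝ) : Prop := ∀ i, ∃ z : ℤ, x i = (z : ℝ)

/-- A lattice polytope: the convex hull of finitely many lattice points. -/
def IsLatticePolytope {n : ℕ} (P : Set (Fin n → ℝ)) : Prop :=
  ∃ S : Set (Fin n → ℝ), S.Finite ∧ (∀ x ∈ S, IsLatticePt x) ∧ P = convexHull ℝ S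

/-- The dual polytope `P* = {y | ⟨x,y⟩ ≥ -1 ∀ x ∈ P}`. -/
def polarDual {n : ℕ} (P : Set (Fin n → ℝ)) : Set (Fin n → ℝ) :=
  {y | ∀ x ∈ P, -1 ≤ pairing x y}

/-- A reflexive polytope. -/
def IsReflexive {n : ℕ} (P : Set (Fin n → ℝ)) : Prop :=
  IsLatticePolytope P ∧ (0 : Fin n → ℝ) ∈ interior P ∧ IsLatticePolytope (polarDual P)

/-- `min⟨P, u⟩ = min_{x ∈ P} ⟨x, u⟩`. -/
def minPair {n : ℕ} (P : Set (Fin n → ℝ)) (u : Fin n → ℝ) : ℝ :=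
  sInf ((fun x => pairing x u) '' P)

/-- The real vector space `ℝ^d ⊕ ℝ^k`. -/
abbrev Vdk (d k : ℕ) := (Fin d → ℝ) × (Fin k → ℝ)

/-- The pairing on `ℝ^d ⊕ ℝ^k` (sum of the two standard pairings). -/
def pairingV {d k : ℕ} (x y : Vdk d k) : ℝ := pairing x.1 y.1 + pairing x.2 y.2

def IsLatticePtV {d k : ℕ} (x : Vdk d k) : Prop := IsLatticePt x.1 ∧ IsLatticePt x.2

def IsLatticePolytopeV {d k : ℕ} (P : Set (Vdk d k)) : Prop :=
  ∃ S : Set (Vdk d k), S.Finite ∧ (∀ x ∈ S, IsLatticePtV x) ∧ P = convexHull ℝ S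

def polarDualV {d k : ℕ} (P : Set (Vdk d k)) : Set (Vdk d k) :=
  {y | ∀ x ∈ P, -1 ≤ pairingV x y}

def IsReflexiveV {d k : ℕ} (P : Set (Vdk d k)) : Prop :=
  IsLatticePolytopeV P ∧ (0 : Vdk d k) ∈ interior P ∧ IsLatticePolytopeV (polarDualV P)

/-- The Cayley cone `σ̄ = {(t₀Δ₀ + ⋯ + t_kΔ_k, t₀, …, t_k) : tᵢ ≥ 0} ⊆ ℝ^d ⊕ ℝ^{k+1}`. -/
def cayleyCone {d k : ℕ} (Δ : Fin (k+1) → Set (Fin d → ℝ)) : Set (Vdk d (k+1)) :=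
  {p | (∀ i, 0 ≤ p.2 i) ∧ p.1 ∈ ∑ i, p.2 i • Δ i}

/-- The dual cone of a cone in `ℝ^d ⊕ ℝ^k`. -/
def dualConeV {d k : ℕ} (σ : Set (Vdk d k)) : Set (Vdk d k) :=
  {y | ∀ x ∈ σ, 0 ≤ pairingV x y}

/-- A (full-dimensional) Gorenstein cone with respect to `ℤ^n`, with distinguished dual
lattice point `nσ`: the cone is generated by finitely many lattice points lying on the
affine hyperplane `{x : ⟨x, nσ⟩ = 1}`. -/
def IsGorensteinCone {n : ℕ} (σ : Set (Fin n → ℝ)) (nσ : Fin n → ℝ) : Prop :=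
  Submodule.span ℝ σ = ⊤ ∧ IsLatticePt nσ ∧
    ∃ S : Set (Fin n → ℝ), S.Finite ∧ (∀ x ∈ S, IsLatticePt x ∧ pairing x nσ = 1) ∧
      σ = {z | ∃ t : ℝ, 0 ≤ t ∧ ∃ x ∈ convexHull ℝ S, z = t • x}

section Aux

variable {n : ℕ}

lemma pairing_comm (x y : Fin n → ℝ) : pairing x y = pairing y x := by
  simp [pairing, mul_comm]

lemma pairing_add_left (x x' y : Fin n → ℝ) :
    pairing (x + x') y = pairing x y + pairing x' y := by
  simp [pairing, add_mul, Finset.sum_add_distrib]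

lemma pairing_smul_left (t : ℝ) (x y : Fin n → ℝ) :
    pairing (t • x) y = t * pairing x y := by
  simp [pairing, Finset.mul_sum, mul_assoc]

lemma pairing_sub_left (x x' y : Fin n → ℝ) :
    pairing (x - x') y = pairing x y - pairing x' y := by
  simp [pairing, sub_mul, Finset.sum_sub_distrib]

lemma pairing_add_right (x y y' : Fin n → ℝ) :
    pairing x (y + y') = pairing x y + pairing x y' := by
  simp [pairing, mul_add, Finset.sum_add_distrib]

lemma pairing_smul_right (t : ℝ) (x y : Fin n → ℝ) :
    pairing x (t • y) = t * pairing x y := by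
  simp only [pairing, Pi.smul_apply, smul_eq_mul, Finset.mul_sum]
  exact Finset.sum_congr rfl fun i _ => by ring

lemma pairing_zero_right (x : Fin n → ℝ) : pairing x 0 = 0 := by
  simp [pairing]

lemma pairing_convexHull {S : Set (Fin n → ℝ)} {v : Fin n → ℝ} {a : ℝ}
    (h : ∀ x ∈ S, pairing x v = a) :
    ∀ c ∈ convexHull ℝ S, pairing c v = a := by
  have hconv : Convex ℝ {x : Fin n → ℝ | pairing x v = a} := by
    intro x hx y hy s t hs ht hst
    simp only [Set.mem_setOf_eq] at hx hy ⊢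
    rw [pairing_add_left, pairing_smul_left, pairing_smul_left, hx, hy]
    rw [← add_mul, hst, one_mul]
  exact fun c hc => convexHull_min (fun x hx => h x hx) hconv hc

end Aux


/-- The dual cone of `σ ⊆ ℝ^n`. -/
def dualCone {n : ℕ} (σ : Set (Fin n → ℝ)) : Set (Fin n → ℝ) :=
  {y | ∀ x ∈ σ, 0 ≤ pairing x y}

/-- for a reflexive Gorenstein cone `σ` of index `r`, the dual of the
reflexive polytope `P = σ_{(r)} − m_{σ∨}` (taken in the quotient `ℝ^n/ℝ·n_σ` via the
induced pairing) equals `π(σ∨_{(1)})`. -/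
theorem dual_of_gorenstein_slice {n : ℕ}
    (σ : Set (Fin n → ℝ)) (nσ mσ : Fin n → ℝ) (r : ℝ)
    (hσ : IsGorensteinCone σ nσ)
    (hσv : IsGorensteinCone (dualCone σ) mσ)
    (hr : r = pairing mσ nσ)
    -- P = σ_{(r)} − m_{σ∨}
    (P : Set (Fin n → ℝ))
    (hP : P = (fun x => x - mσ) '' {x ∈ σ | pairing x nσ = r}) :
    -- P* = π(σ∨_{(1)}) in ℝ^n/ℝ·n_σ
    {yq : (Fin n → ℝ) ⧸ (Submodule.span ℝ {nσ}) |
        ∀ x ∈ P, ∀ y : Fin n → ℝ, Submodule.Quotient.mk y = yq → -1 ≤ pairing x y} =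
      (Submodule.span ℝ {nσ}).mkQ '' {y ∈ dualCone σ | pairing mσ y = 1} := by
  obtain ⟨hspan, hnlat, S, hSfin, hS, hσeq⟩ := hσ
  obtain ⟨hspanv, hmlat, T, hTfin, hT, hσveq⟩ := hσv
  -- every element of the convex hull of S pairs to 1 with nσ
  have hSh : ∀ c ∈ convexHull ℝ S, pairing c nσ = 1 :=
    pairing_convexHull (fun x hx => (hS x hx).2)
  have hTh : ∀ c ∈ convexHull ℝ T, pairing c mσ = 1 :=
    pairing_convexHull (fun x hx => (hT x hx).2)
  -- S is nonempty
  have hSne : S.Nonempty := by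
    by_contra hSe
    rw [Set.not_nonempty_iff_eq_empty] at hSe
    subst hSe
    have hσe : σ = ∅ := by
      rw [hσeq]
      ext z
      simp [convexHull_empty]
    have hduniv : dualCone σ = Set.univ := by
      ext y; simp [dualCone, hσe]
    have h0 : (0 : Fin n → ℝ) ∈ dualCone σ := by rw [hduniv]; trivial
    rw [hσveq] at h0
    obtain ⟨t0, ht0, x0, hx0, hx0e⟩ := h0
    -- so convexHull T is nonempty; now -x0 is in the dual cone too
    have hneg : -x0 ∈ dualCone σ := by rw [hduniv]; trivial
    rw [hσveq] at hneg
    obtain ⟨t1, ht1, x1, hx1, hx1e⟩ := hneg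
    have e1 : pairing (-x0) mσ = -1 := by
      have : pairing (-x0) mσ = pairing ((-1 : ℝ) • x0) mσ := by norm_num
      rw [this, pairing_smul_left, hTh x0 hx0]; ring
    have e2 : pairing (-x0) mσ = t1 := by
      rw [hx1e, pairing_smul_left, hTh x1 hx1, mul_one]
    linarith
  obtain ⟨c₀, hc₀⟩ := hSne
  -- nσ ∈ dualCone σ
  have hnd : nσ ∈ dualCone σ := by
    intro x hx
    rw [hσeq] at hx
    obtain ⟨t, ht, c, hc, rfl⟩ := hx
    rw [pairing_smul_left, hSh c hc, mul_one]; exact ht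
  -- r > 0
  have hrpos : 0 < r := by
    rw [hσveq] at hnd
    obtain ⟨t, ht, c, hc, hce⟩ := hnd
    have hrt : r = t := by
      rw [hr, pairing_comm, hce, pairing_smul_left, hTh c hc, mul_one]
    rcases lt_or_eq_of_le ht with h | h
    · rw [hrt]; exact h
    · exfalso
      have hn0 : nσ = 0 := by rw [hce, ← h, zero_smul]
      have := (hS c₀ hc₀).2
      rw [hn0, pairing_zero_right] at this
      norm_num at this
  ext yq
  constructor
  · -- hard direction
    intro hyq
    simp only [Set.mem_setOf_eq] at hyq
    obtain ⟨y₀, rfl⟩ := Submodule.Quotient.mk_surjective _ yq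
    set t : ℝ := (1 - pairing mσ y₀) / r with ht
    set y : Fin n → ℝ := y₀ + t • nσ with hy
    have hmk : (Submodule.Quotient.mk y : (Fin n → ℝ) ⧸ (Submodule.span ℝ {nσ})) =
        Submodule.Quotient.mk y₀ := by
      rw [Submodule.Quotient.eq]
      have : y - y₀ = t • nσ := by rw [hy]; abel
      rw [this]
      exact Submodule.smul_mem _ _ (Submodule.mem_span_singleton_self nσ)
    have hmσy : pairing mσ y = 1 := by
      rw [hy, pairing_add_right, pairing_smul_right, ← hr, ht]
      field_simp
      ring
    -- key: pairing c y ≥ 0 for c in convexHull S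
    have hkey : ∀ c ∈ convexHull ℝ S, 0 ≤ pairing c y := by
      intro c hc
      have hrc : r • c ∈ σ := by
        rw [hσeq]; exact ⟨r, le_of_lt hrpos, c, hc, rfl⟩
      have hrcn : pairing (r • c) nσ = r := by
        rw [pairing_smul_left, hSh c hc, mul_one]
      have hmem : r • c - mσ ∈ P := by
        rw [hP]; exact ⟨r • c, ⟨hrc, hrcn⟩, rfl⟩
      have := hyq _ hmem y hmk
      rw [pairing_sub_left, pairing_smul_left, hmσy] at this
      nlinarith
    refine ⟨y, ⟨?_, hmσy⟩, ?_⟩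
    · intro x hx
      rw [hσeq] at hx
      obtain ⟨s, hs, c, hc, rfl⟩ := hx
      rw [pairing_smul_left]
      exact mul_nonneg hs (hkey c hc)
    · exact hmk
  · -- easy direction
    rintro ⟨y, ⟨hyd, hym⟩, rfl⟩
    simp only [Set.mem_setOf_eq]
    intro x hx y' hy'
    rw [hP] at hx
    obtain ⟨x', ⟨hx'σ, hx'n⟩, rfl⟩ := hx
    have hyy' : y' - y ∈ Submodule.span ℝ {nσ} := by
      rw [← Submodule.Quotient.eq]
      exact hy'
    rw [Submodule.mem_span_singleton] at hyy'
    obtain ⟨a, ha⟩ := hyy'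
    have hy'e : y' = y + a • nσ := by rw [ha]; abel
    have h1 : pairing (x' - mσ) y' = pairing x' y - 1 := by
      rw [hy'e, pairing_add_right, pairing_smul_right, pairing_sub_left,
        pairing_sub_left, hym, hx'n, ← hr]
      ring
    rw [h1]
    have := hyd x' hx'σ
    linarith
end
end

section
/- Let Δ = Δ_0 + Δ_1 + ⋯ + Δ_k be a Minkowski sum decomposition of a reflexive polytope Δ ⊂ ℝ^d into lattice polytopes, σ̄ ⊂ ℝ^d ⊕ ℝ^{k+1} the Cayley cone, n_σ̄ = r_0* + ⋯ + r_k* and m_{σ̄∨} = r_0 + ⋯ + r_k. Then: (i) the linear map from the hyperplane n_σ̄^⊥ ⊂ ℝ^d ⊕ ℝ^{k+1} to ℝ^d ⊕ ℝ^k sending (m, α_0, …, α_k) to (m, α_1, …, α_k) maps σ̄_{(k+1)} − m_{σ̄∨} bijectively onto (k+1)·Conv(Δ_0, Δ_1 + e_1, …, Δ_k + e_k) − (e_1 + ⋯ + e_k), where σ̄_{(k+1)} = {x ∈ σ̄ : ⟨x, n_σ̄⟩ = k+1}; and (ii) the linear map π : ℝ^d ⊕ ℝ^{k+1} → ℝ^d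 ⊕ ℝ^k sending (m, α_0, …, α_k) to (m, α_1 − α_0, …, α_k − α_0) satisfies π(σ̄_{(1)}) = Conv(Δ_0 − (e_1 + ⋯ + e_k), Δ_1 + e_1, …, Δ_k + e_k), where σ̄_{(1)} = {x ∈ σ̄ : ⟨x, n_σ̄⟩ = 1}. -/
open scoped Pointwise
open Set

noncomputable section

section Combo
variable {E : Type*} [AddCommGroup E] [Module ℝ E]

/-- Points expressible as a convex combination picking one point from each `A i`. -/
def comboSet {n : ℕ} (A : Fin n → Set E) : Set E :=
  {x | ∃ (t : Fin n → ℝ) (a : Fin n → E), (∀ i, 0 ≤ t i) ∧ ∑ i, t i = 1 ∧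
    (∀ i, a i ∈ A i) ∧ x = ∑ i, t i • a i}

lemma comboSet_convex {n : ℕ} (A : Fin n → Set E) (hA : ∀ i, Convex ℝ (A i)) :
    Convex ℝ (comboSet A) := by
  rintro x ⟨t, a, ht, hts, ha, rfl⟩ y ⟨s, b, hs, hss, hb, rfl⟩ lam mu hlam hmu hlm
  classical
  set u : Fin n → ℝ := fun i => lam * t i + mu * s i with hu
  have hu0 : ∀ i, 0 ≤ u i := fun i =>
    add_nonneg (mul_nonneg hlam (ht i)) (mul_nonneg hmu (hs i))
  set c : Fin n → E := fun i =>
    if h : u i = 0 then a i else ((lam * t i) / u i) • a i + ((mu * s i) / u i) • b i with hc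
  have hterm : ∀ i, u i • c i = (lam * t i) • a i + (mu * s i) • b i := by
    intro i
    by_cases h : u i = 0
    · have h' : lam * t i + mu * s i = 0 := by simpa [hu] using h
      have h1 : lam * t i = 0 := by
        linarith [mul_nonneg hlam (ht i), mul_nonneg hmu (hs i)]
      have h2 : mu * s i = 0 := by
        linarith [mul_nonneg hlam (ht i), mul_nonneg hmu (hs i)]
      simp [hc, h, h1, h2]
    · have hci : c i = ((lam * t i) / u i) • a i + ((mu * s i) / u i) • b i := by
        simp only [hc]; rw [dif_neg h]
      rw [hci, smul_add, smul_smul, smul_smul, mul_div_cancel₀ _ h, mul_div_cancel₀ _ h]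
  refine ⟨u, c, hu0, ?_, ?_, ?_⟩
  · simp only [hu]
    rw [Finset.sum_add_distrib, ← Finset.mul_sum, ← Finset.mul_sum, hts, hss]
    simpa using hlm
  · intro i
    by_cases h : u i = 0
    · simp only [hc, h, dif_pos]; exact ha i
    · simp only [hc, h, dif_neg]
      refine hA i (ha i) (hb i) (div_nonneg (mul_nonneg hlam (ht i)) (hu0 i))
        (div_nonneg (mul_nonneg hmu (hs i)) (hu0 i)) ?_
      field_simp
      simp [hu]
  · rw [Finset.smul_sum, Finset.smul_sum, ← Finset.sum_add_distrib]
    refine (Finset.sum_congr rfl fun i _ => ?_).symm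
    rw [hterm i, smul_smul, smul_smul]

lemma convexHull_iUnion_eq_comboSet {n : ℕ} (A : Fin n → Set E)
    (hA : ∀ i, Convex ℝ (A i)) (hne : ∀ i, (A i).Nonempty) :
    convexHull ℝ (⋃ i, A i) = comboSet A := by
  classical
  apply le_antisymm
  · apply convexHull_min _ (comboSet_convex A hA)
    rintro x hx
    obtain ⟨i, hi⟩ := mem_iUnion.mp hx
    refine ⟨fun j => if j = i then 1 else 0,
      Function.update (fun j => (hne j).some) i x, ?_, ?_, ?_, ?_⟩
    · intro j; positivity
    · simp
    · intro j
      by_cases h : j = i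
      · subst h; simpa using hi
      · rw [Function.update_of_ne h]; exact (hne j).some_mem
    · rw [Finset.sum_eq_single i]
      · simp
      · intro j _ hj; simp [hj]
      · simp
  · rintro x ⟨t, a, ht, hts, ha, rfl⟩
    exact (convex_convexHull ℝ _).sum_mem (fun i _ => ht i) hts
      (fun i _ => subset_convexHull ℝ _ (mem_iUnion.mpr ⟨i, ha i⟩))

end Combo

section CayleyHelpers

/-- Second coordinates of the vertices of the (shifted) Cayley polytope. -/
def cayleyW (k : ℕ) (c0 : ℝ) : Fin (k+1) → (Fin k → ℝ) :=
  Fin.cases (fun _ => c0) (fun i => Pi.single i 1)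

lemma sum_smul_cayleyW (k : ℕ) (c0 : ℝ) (t : Fin (k+1) → ℝ) :
    ∑ i, t i • cayleyW k c0 i = fun j => t j.succ + t 0 * c0 := by
  funext j
  have h1 : (∑ i, t i • cayleyW k c0 i) j = ∑ i, t i * cayleyW k c0 i j := by
    simp [Finset.sum_apply]
  rw [h1, Fin.sum_univ_succ]
  simp only [cayleyW, Fin.cases_zero, Fin.cases_succ]
  have h2 : ∀ i : Fin k, t i.succ * (Pi.single i 1 : Fin k → ℝ) j
      = if j = i then t i.succ else 0 := by
    intro i; simp [Pi.single_apply]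
  simp only [h2]
  rw [Finset.sum_ite_eq]
  simp [add_comm]

lemma mem_cayley_slice {d k : ℕ} (Δ : Fin (k+1) → Set (Fin d → ℝ)) (s : ℝ)
    (p : Vdk d (k+1)) :
    p ∈ {x ∈ cayleyCone Δ | pairingV x (((0 : Fin d → ℝ), fun _ => 1) : Vdk d (k+1)) = s} ↔
    (∀ i, 0 ≤ p.2 i) ∧ (∑ i, p.2 i = s) ∧
      ∃ x : Fin (k+1) → (Fin d → ℝ), (∀ i, x i ∈ Δ i) ∧ p.1 = ∑ i, p.2 i • x i := by
  constructor
  · rintro ⟨⟨hpos, hmem⟩, hpair⟩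
    refine ⟨hpos, ?_, ?_⟩
    · rw [← hpair]; simp [pairingV, pairing]
    · rw [Set.mem_fintype_sum] at hmem
      obtain ⟨g, hg, hsum⟩ := hmem
      choose y hy hgy using fun i => (Set.mem_smul_set.mp (hg i))
      exact ⟨y, hy, by rw [← hsum]; exact Finset.sum_congr rfl fun i _ => (hgy i).symm⟩
  · rintro ⟨hpos, hsum, x, hx, hp1⟩
    refine ⟨⟨hpos, ?_⟩, by simp [pairingV, pairing, hsum]⟩
    rw [Set.mem_fintype_sum]
    exact ⟨fun i => p.2 i • x i, fun i => Set.smul_mem_smul_set (hx i), hp1.symm⟩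

lemma convex_pair_image {d k : ℕ} {s : Set (Fin d → ℝ)} (hs : Convex ℝ s)
    (c : Fin k → ℝ) : Convex ℝ ((fun x => ((x, c) : Vdk d k)) '' s) := by
  rintro - ⟨x, hx, rfl⟩ - ⟨y, hy, rfl⟩ a b ha hb hab
  refine ⟨a • x + b • y, hs hx hy ha hb hab, ?_⟩
  have : a • c + b • c = c := by rw [← add_smul, hab, one_smul]
  simp [Prod.smul_mk, Prod.mk_add_mk, this]

/-- The parameterized description of the slices. -/
def sliceParam {d k : ℕ} (Δ : Fin (k+1) → Set (Fin d → ℝ)) (s : ℝ)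
    (v : Fin (k+1) → (Fin k → ℝ)) : Set (Vdk d k) :=
  {p | ∃ (t : Fin (k+1) → ℝ) (x : Fin (k+1) → (Fin d → ℝ)),
    (∀ i, 0 ≤ t i) ∧ ∑ i, t i = s ∧ (∀ i, x i ∈ Δ i) ∧
    p = (∑ i, t i • x i, ∑ i, t i • v i)}

lemma comboSet_eq_sliceParam {d k : ℕ} (Δ : Fin (k+1) → Set (Fin d → ℝ))
    (v : Fin (k+1) → (Fin k → ℝ)) :
    comboSet (fun i => (fun x => ((x, v i) : Vdk d k)) '' Δ i) = sliceParam Δ 1 v := by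
  ext p
  constructor
  · rintro ⟨t, a, ht, hts, ha, rfl⟩
    choose x hx hax using ha
    refine ⟨t, x, ht, hts, hx, ?_⟩
    have : ∀ i, t i • a i = (t i • x i, t i • v i) := by
      intro i; rw [← hax i]; rfl
    simp only [this]
    rw [Prod.ext_iff]
    constructor
    · rw [Prod.fst_sum]
    · rw [Prod.snd_sum]
  · rintro ⟨t, x, ht, hts, hx, rfl⟩
    refine ⟨t, fun i => (x i, v i), ht, hts, fun i => ⟨x i, hx i, rfl⟩, ?_⟩
    simp [Prod.ext_iff, Prod.fst_sum, Prod.snd_sum]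

lemma cayley_union_eq_iUnion {d k : ℕ} (Δ : Fin (k+1) → Set (Fin d → ℝ)) (c0 : ℝ) :
    ((fun x => ((x, fun _ => c0) : Vdk d k)) '' Δ 0 ∪
        ⋃ i : Fin k, (fun x => ((x, Pi.single i 1) : Vdk d k)) '' Δ i.succ) =
      ⋃ i : Fin (k+1), (fun x => ((x, cayleyW k c0 i) : Vdk d k)) '' Δ i := by
  ext p
  simp only [Set.mem_union, Set.mem_iUnion]
  constructor
  · rintro (h | ⟨i, h⟩)
    · exact ⟨0, by simpa [cayleyW] using h⟩
    · exact ⟨i.succ, by simpa [cayleyW] using h⟩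
  · rintro ⟨i, h⟩
    induction i using Fin.cases with
    | zero => exact Or.inl (by simpa [cayleyW] using h)
    | succ i => exact Or.inr ⟨i, by simpa [cayleyW] using h⟩

lemma convexHull_cayley {d k : ℕ} (Δ : Fin (k+1) → Set (Fin d → ℝ))
    (hconv : ∀ i, Convex ℝ (Δ i)) (hne : ∀ i, (Δ i).Nonempty) (c0 : ℝ) :
    convexHull ℝ ((fun x => ((x, fun _ => c0) : Vdk d k)) '' Δ 0 ∪
        ⋃ i : Fin k, (fun x => ((x, Pi.single i 1) : Vdk d k)) '' Δ i.succ) =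
      sliceParam Δ 1 (cayleyW k c0) := by
  rw [cayley_union_eq_iUnion, convexHull_iUnion_eq_comboSet _
    (fun i => convex_pair_image (hconv i) _) (fun i => (hne i).image _),
    comboSet_eq_sliceParam]

end CayleyHelpers

/-- description of the reflexive polytope `σ̄_{(k+1)} − m_{σ̄∨}` and of the
slice `π(σ̄_{(1)})` for the Cayley cone `σ̄`. -/
theorem cayley_slices {d k : ℕ}
    (Δ : Fin (k+1) → Set (Fin d → ℝ))
    (hlat : ∀ i, IsLatticePolytope (Δ i))
    (hrefl : IsReflexive (∑ i, Δ i))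
    -- distinguished points n_σ̄ = r₀* + ⋯ + r_k* and m_σ̄∨ = r₀ + ⋯ + r_k
    (nbar mbar : Vdk d (k+1))
    (hn : nbar = ((0 : Fin d → ℝ), fun _ => 1))
    (hm : mbar = ((0 : Fin d → ℝ), fun _ => 1))
    -- Δ̂₀ = Conv(Δ₀, Δ₁ + e₁, …, Δ_k + e_k) ⊆ ℝ^d ⊕ ℝ^k
    (Q : Set (Vdk d k))
    (hQ : Q = convexHull ℝ ((fun x => ((x, 0) : Vdk d k)) '' Δ 0 ∪
        ⋃ i : Fin k, (fun x => ((x, Pi.single i 1) : Vdk d k)) '' Δ i.succ)) :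
    -- (i) (m, α₀, …, α_k) ↦ (m, α₁, …, α_k) maps σ̄_{(k+1)} − m_σ̄∨ bijectively onto
    --     (k+1)·Conv(Δ₀, Δ₁+e₁, …, Δ_k+e_k) − (e₁ + ⋯ + e_k)
    Set.BijOn (fun p : Vdk d (k+1) => ((p.1, fun i => p.2 i.succ) : Vdk d k))
      ((fun x => x - mbar) '' {x ∈ cayleyCone Δ | pairingV x nbar = (k : ℝ) + 1})
      ((fun y => y - (((0 : Fin d → ℝ), fun _ => 1) : Vdk d k)) '' (((k : ℝ) + 1) • Q)) ∧
    -- (ii) π(σ̄_{(1)}) = Conv(Δ₀ − (e₁+⋯+e_k), Δ₁ + e₁, …, Δ_k + e_k)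
    (fun p : Vdk d (k+1) => ((p.1, fun i => p.2 i.succ - p.2 0) : Vdk d k)) ''
        {x ∈ cayleyCone Δ | pairingV x nbar = 1} =
      convexHull ℝ ((fun x => ((x, fun _ => -1) : Vdk d k)) '' Δ 0 ∪
        ⋃ i : Fin k, (fun x => ((x, Pi.single i 1) : Vdk d k)) '' Δ i.succ) := by
  subst hn hm
  have hconv : ∀ i, Convex ℝ (Δ i) := by
    intro i
    obtain ⟨S, -, -, hS⟩ := hlat i
    rw [hS]; exact convex_convexHull ℝ S
  have hne : ∀ i, (Δ i).Nonempty := by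
    have h0 : (0 : Fin d → ℝ) ∈ ∑ i, Δ i := interior_subset hrefl.2.1
    rw [Set.mem_fintype_sum] at h0
    obtain ⟨g, hg, -⟩ := h0
    exact fun i => ⟨g i, hg i⟩
  set kk : ℝ := (k : ℝ) + 1 with hkk
  have hkk0 : (0 : ℝ) < kk := by positivity
  have hQ' : Q = sliceParam Δ 1 (cayleyW k 0) := by
    rw [hQ]; exact convexHull_cayley Δ hconv hne 0
  -- characterization of the source of (i)
  have hS : ((fun x => x - (((0 : Fin d → ℝ), fun _ => 1) : Vdk d (k+1))) ''
      {x ∈ cayleyCone Δ | pairingV x ((0 : Fin d → ℝ), fun _ => 1) = (k : ℝ) + 1}) =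
      {p : Vdk d (k+1) | ∃ (t : Fin (k+1) → ℝ) (x : Fin (k+1) → (Fin d → ℝ)),
        (∀ i, 0 ≤ t i) ∧ ∑ i, t i = kk ∧ (∀ i, x i ∈ Δ i) ∧
        p = (∑ i, t i • x i, fun i => t i - 1)} := by
    ext p
    constructor
    · rintro ⟨q, hq, rfl⟩
      rw [mem_cayley_slice] at hq
      obtain ⟨hpos, hsum, x, hx, hq1⟩ := hq
      refine ⟨q.2, x, hpos, hsum, hx, ?_⟩
      rw [Prod.ext_iff]
      refine ⟨by simp [hq1], ?_⟩
      funext i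
      simp [Prod.snd_sub]
    · rintro ⟨t, x, ht, hts, hx, rfl⟩
      refine ⟨(∑ i, t i • x i, t), ?_, ?_⟩
      · rw [mem_cayley_slice]
        exact ⟨ht, hts, x, hx, rfl⟩
      · rw [Prod.ext_iff]
        exact ⟨by simp, by funext i; simp⟩
  -- characterization of the target of (i)
  have hT : ((fun y => y - (((0 : Fin d → ℝ), fun _ => 1) : Vdk d k)) '' (kk • Q)) =
      {p : Vdk d k | ∃ (t : Fin (k+1) → ℝ) (x : Fin (k+1) → (Fin d → ℝ)),
        (∀ i, 0 ≤ t i) ∧ ∑ i, t i = kk ∧ (∀ i, x i ∈ Δ i) ∧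
        p = (∑ i, t i • x i, fun j => t j.succ - 1)} := by
    ext p
    constructor
    · rintro ⟨q, hq, rfl⟩
      rw [Set.mem_smul_set] at hq
      obtain ⟨u, hu, rfl⟩ := hq
      rw [hQ'] at hu
      obtain ⟨s, x, hs, hss, hx, rfl⟩ := hu
      refine ⟨fun i => kk * s i, x, fun i => mul_nonneg hkk0.le (hs i), ?_, hx, ?_⟩
      · rw [← Finset.mul_sum, hss, mul_one]
      · rw [sum_smul_cayleyW, Prod.ext_iff]
        constructor
        · show kk • (∑ i, s i • x i) - 0 = _
          rw [sub_zero, Finset.smul_sum]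
          refine Finset.sum_congr rfl fun i _ => ?_
          show kk • s i • x i = (kk * s i) • x i
          rw [smul_smul]
        · funext j
          show kk * (s j.succ + s 0 * 0) - 1 = kk * s j.succ - 1
          ring
    · rintro ⟨t, x, ht, hts, hx, rfl⟩
      refine ⟨kk • ((∑ i, (t i / kk) • x i, ∑ i, (t i / kk) • cayleyW k 0 i) : Vdk d k),
        Set.smul_mem_smul_set ?_, ?_⟩
      · rw [hQ']
        refine ⟨fun i => t i / kk, x, fun i => div_nonneg (ht i) hkk0.le, ?_, hx, rfl⟩
        rw [← Finset.sum_div, hts, div_self hkk0.ne']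
      · rw [sum_smul_cayleyW, Prod.ext_iff]
        constructor
        · show kk • (∑ i, (t i / kk) • x i) - 0 = _
          rw [sub_zero, Finset.smul_sum]
          refine Finset.sum_congr rfl fun i _ => ?_
          rw [smul_smul, mul_div_cancel₀ _ hkk0.ne']
        · funext j
          show kk * (t j.succ / kk + t 0 / kk * 0) - 1 = t j.succ - 1
          field_simp
          ring
  constructor
  · rw [hS, hT]
    refine ⟨?_, ?_, ?_⟩
    · rintro p ⟨t, x, ht, hts, hx, rfl⟩
      exact ⟨t, x, ht, hts, hx, rfl⟩
    · rintro p ⟨t, x, ht, hts, hx, rfl⟩ p' ⟨t', x', ht', hts', hx', rfl⟩ hf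
      rw [Prod.ext_iff] at hf
      obtain ⟨hf1, hf2⟩ := hf
      have hsq : ∀ j : Fin k, t j.succ = t' j.succ := by
        intro j
        have := congrFun hf2 j
        simpa using this
      have h0 : t 0 = t' 0 := by
        have e1 : t 0 + ∑ j : Fin k, t j.succ = kk := by
          rw [← Fin.sum_univ_succ]; exact hts
        have e2 : t' 0 + ∑ j : Fin k, t' j.succ = kk := by
          rw [← Fin.sum_univ_succ]; exact hts'
        have e3 : ∑ j : Fin k, t j.succ = ∑ j : Fin k, t' j.succ :=
          Finset.sum_congr rfl fun j _ => hsq j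
        linarith
    
      have htt : t = t' := by
        funext i
        induction i using Fin.cases with
        | zero => exact h0
        | succ j => exact hsq j
      rw [Prod.ext_iff]
      exact ⟨by simpa [htt] using hf1, by rw [htt]⟩
    · rintro p ⟨t, x, ht, hts, hx, rfl⟩
      exact ⟨(∑ i, t i • x i, fun i => t i - 1), ⟨t, x, ht, hts, hx, rfl⟩, rfl⟩
  · rw [convexHull_cayley Δ hconv hne (-1)]
    ext p
    constructor
    · rintro ⟨q, hq, rfl⟩
      rw [mem_cayley_slice] at hq
      obtain ⟨hpos, hsum, x, hx, hq1⟩ := hq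
      refine ⟨q.2, x, hpos, hsum, hx, ?_⟩
      rw [sum_smul_cayleyW, Prod.ext_iff]
      refine ⟨hq1, ?_⟩
      funext j
      show q.2 j.succ - q.2 0 = q.2 j.succ + q.2 0 * (-1)
      ring
    · rintro ⟨t, x, ht, hts, hx, rfl⟩
      refine ⟨(∑ i, t i • x i, t), ?_, ?_⟩
      · rw [mem_cayley_slice]
        exact ⟨ht, hts, x, hx, rfl⟩
      · rw [sum_smul_cayleyW, Prod.ext_iff]
        refine ⟨rfl, ?_⟩
        funext j
        show t j.succ - t 0 = t j.succ + t 0 * (-1)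
        ring
end
end
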